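/- Adding the element 8l+14 to A_{2l-1} = {0,1,2,5,8,9,10} ∪ {8k+c : 1 ≤ k ≤ l, c ∈ {6,7,9,10}} creates exactly 4 new sums and exactly 6 new differences; the new sums are {16l+21, 16l+23, 16l+24, 16l+28} and the new differences are ±{8l+12, 8l+13, 8l+14}. -/

import Mathlib

open Finset Pointwise

lemma memA_aux (l x : ℤ) : x ∈ (({0,1,2,5,8,9,10} : Finset ℤ) ∪
    Finset.image₂ (fun k c => 8*k+c) (Finset.Icc 1 l) ({6,7,9,10}:Finset ℤ)) ↔
    ((x = 0 ∨ x = 1 ∨ x = 2 ∨ x = 5 ∨ x = 8 ∨ x = 9 ∨ x = 10) ∨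
     ∃ k, 1 ≤ k ∧ k ≤ l ∧ (x = 8*k+6 ∨ x = 8*k+7 ∨ x = 8*k+9 ∨ x = 8*k+10)) := by
  simp only [Finset.mem_union, Finset.mem_image₂, Finset.mem_Icc, Finset.mem_insert,
    Finset.mem_singleton]
  constructor
  · rintro (h | ⟨k, ⟨h1,h2⟩, c, hc, rfl⟩)
    · tauto
    · right; exact ⟨k, h1, h2, by rcases hc with rfl|rfl|rfl|rfl <;> omega⟩
  · rintro (h | ⟨k, h1, h2, h3⟩)
    · tauto
    · right
      refine ⟨k, ⟨h1, h2⟩, ?_⟩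
      rcases h3 with rfl|rfl|rfl|rfl
      exacts [⟨6, by simp⟩, ⟨7, by simp⟩, ⟨9, by simp⟩, ⟨10, by simp⟩]

theorem stmt_17 (l : ℤ) (hl : 1 ≤ l) (A B : Finset ℤ)
    (hA : A = ({0, 1, 2, 5, 8, 9, 10} : Finset ℤ) ∪
      Finset.image₂ (fun k c => 8 * k + c) (Finset.Icc 1 l)
        ({6, 7, 9, 10} : Finset ℤ))
    (hB : B = A ∪ {8 * l + 14}) :
    (B + B) \ (A + A) = {16 * l + 21, 16 * l + 23, 16 * l + 24, 16 * l + 28} ∧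
    (B - B) \ (A - A) =
      {8 * l + 12, 8 * l + 13, 8 * l + 14, -(8 * l + 12), -(8 * l + 13), -(8 * l + 14)} ∧
    ((B + B) \ (A + A)).card = 4 ∧ ((B - B) \ (A - A)).card = 6 := by
  have hmem : ∀ x : ℤ, x ∈ A ↔
      ((x = 0 ∨ x = 1 ∨ x = 2 ∨ x = 5 ∨ x = 8 ∨ x = 9 ∨ x = 10) ∨
       ∃ k, 1 ≤ k ∧ k ≤ l ∧ (x = 8*k+6 ∨ x = 8*k+7 ∨ x = 8*k+9 ∨ x = 8*k+10)) := by
    intro x; rw [hA]; exact memA_aux l x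
  have mA : ∀ x : ℤ, ((x = 0 ∨ x = 1 ∨ x = 2 ∨ x = 5 ∨ x = 8 ∨ x = 9 ∨ x = 10) ∨
       ∃ k, 1 ≤ k ∧ k ≤ l ∧ (x = 8*k+6 ∨ x = 8*k+7 ∨ x = 8*k+9 ∨ x = 8*k+10)) → x ∈ A :=
    fun x h => (hmem x).2 h
  have hmemB : ∀ x : ℤ, x ∈ B ↔ x ∈ A ∨ x = 8*l+14 := by
    intro x; rw [hB]; simp [Finset.mem_union]; exact or_comm
  have hbd : ∀ a ∈ A, 0 ≤ a ∧ a ≤ 8*l+10 := by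
    intro a ha
    rw [hmem] at ha
    rcases ha with h | ⟨k, hk1, hk2, hc⟩ <;> omega
  have bddS : ∀ x ∈ A + A, x ≤ 16*l+20 := by
    intro x hx
    rw [Finset.mem_add] at hx
    obtain ⟨a, ha, b, hb, rfl⟩ := hx
    have := hbd a ha; have := hbd b hb; omega
  have bddD : ∀ x ∈ A - A, -(8*l+10) ≤ x ∧ x ≤ 8*l+10 := by
    intro x hx
    rw [Finset.mem_sub] at hx
    obtain ⟨a, ha, b, hb, rfl⟩ := hx
    have := hbd a ha; have := hbd b hb; omega
  have negAA : ∀ x ∈ A - A, -x ∈ A - A := by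
    intro x hx
    rw [Finset.mem_sub] at hx ⊢
    obtain ⟨a, ha, b, hb, h⟩ := hx
    exact ⟨b, hb, a, ha, by omega⟩
  have zeroAA : (0:ℤ) ∈ A - A := by
    rw [Finset.mem_sub]
    exact ⟨0, mA 0 (by tauto), 0, mA 0 (by tauto), by ring⟩
  have keyS : ∀ a ∈ A, a ≠ 8*l+7 → a ≠ 8*l+9 → a ≠ 8*l+10 → a + (8*l+14) ∈ A + A := by
    intro a ha h7 h9 h10
    rw [Finset.mem_add]
    rw [hmem] at ha
    rcases ha with (rfl|rfl|rfl|rfl|rfl|rfl|rfl) | ⟨k, hk1, hk2, hc⟩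
    · exact ⟨5, mA _ (by tauto), 8*l+9, mA _ (Or.inr ⟨l, hl, le_refl l, by omega⟩), by ring⟩
    · exact ⟨5, mA _ (by tauto), 8*l+10, mA _ (Or.inr ⟨l, hl, le_refl l, by omega⟩), by ring⟩
    · exact ⟨10, mA _ (by tauto), 8*l+6, mA _ (Or.inr ⟨l, hl, le_refl l, by omega⟩), by ring⟩
    · exact ⟨9, mA _ (by tauto), 8*l+10, mA _ (Or.inr ⟨l, hl, le_refl l, by omega⟩), by ring⟩
    · exact ⟨15, mA _ (Or.inr ⟨1, le_refl 1, hl, by omega⟩), 8*l+7,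
        mA _ (Or.inr ⟨l, hl, le_refl l, by omega⟩), by ring⟩
    · exact ⟨14, mA _ (Or.inr ⟨1, le_refl 1, hl, by omega⟩), 8*l+9,
        mA _ (Or.inr ⟨l, hl, le_refl l, by omega⟩), by ring⟩
    · exact ⟨14, mA _ (Or.inr ⟨1, le_refl 1, hl, by omega⟩), 8*l+10,
        mA _ (Or.inr ⟨l, hl, le_refl l, by omega⟩), by ring⟩
    · rcases hc with rfl|rfl|rfl|rfl
      · exact ⟨8*k+10, mA _ (Or.inr ⟨k, hk1, hk2, by omega⟩), 8*l+10,
          mA _ (Or.inr ⟨l, hl, le_refl l, by omega⟩), by ring⟩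
      · exact ⟨8*k+14, mA _ (Or.inr ⟨k+1, by omega, by omega, by omega⟩), 8*l+7,
          mA _ (Or.inr ⟨l, hl, le_refl l, by omega⟩), by ring⟩
      · exact ⟨8*k+14, mA _ (Or.inr ⟨k+1, by omega, by omega, by omega⟩), 8*l+9,
          mA _ (Or.inr ⟨l, hl, le_refl l, by omega⟩), by ring⟩
      · exact ⟨8*k+14, mA _ (Or.inr ⟨k+1, by omega, by omega, by omega⟩), 8*l+10,
          mA _ (Or.inr ⟨l, hl, le_refl l, by omega⟩), by ring⟩
  have keyD : ∀ a ∈ A, a ≠ 0 → a ≠ 1 → a ≠ 2 → (8*l+14) - a ∈ A - A := by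
    intro a ha h0 h1 h2
    rw [Finset.mem_sub]
    rw [hmem] at ha
    rcases ha with (rfl|rfl|rfl|rfl|rfl|rfl|rfl) | ⟨k, hk1, hk2, hc⟩
    · omega
    · omega
    · omega
    · exact ⟨8*l+9, mA _ (Or.inr ⟨l, hl, le_refl l, by omega⟩), 0, mA _ (by tauto), by ring⟩
    · exact ⟨8*l+6, mA _ (Or.inr ⟨l, hl, le_refl l, by omega⟩), 0, mA _ (by tauto), by ring⟩
    · exact ⟨8*l+10, mA _ (Or.inr ⟨l, hl, le_refl l, by omega⟩), 5, mA _ (by tauto), by ring⟩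
    · exact ⟨8*l+6, mA _ (Or.inr ⟨l, hl, le_refl l, by omega⟩), 2, mA _ (by tauto), by ring⟩
    · rcases hc with rfl|rfl|rfl|rfl
      · by_cases hkl : k = l
        · exact ⟨8, mA _ (by tauto), 0, mA _ (by tauto), by rw [hkl]; ring⟩
        · exact ⟨8*(l-k)+10, mA _ (Or.inr ⟨l-k, by omega, by omega, by omega⟩), 2,
            mA _ (by tauto), by ring⟩
      · by_cases hkl : k = l
        · exact ⟨8, mA _ (by tauto), 1, mA _ (by tauto), by rw [hkl]; ring⟩
        · exact ⟨8*(l-k)+7, mA _ (Or.inr ⟨l-k, by omega, by omega, by omega⟩), 0,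
            mA _ (by tauto), by ring⟩
      · by_cases hkl : k = l
        · exact ⟨5, mA _ (by tauto), 0, mA _ (by tauto), by rw [hkl]; ring⟩
        · exact ⟨8*(l-k)+6, mA _ (Or.inr ⟨l-k, by omega, by omega, by omega⟩), 1,
            mA _ (by tauto), by ring⟩
      · by_cases hkl : k = l
        · exact ⟨5, mA _ (by tauto), 1, mA _ (by tauto), by rw [hkl]; ring⟩
        · exact ⟨8*(l-k)+6, mA _ (Or.inr ⟨l-k, by omega, by omega, by omega⟩), 2,
            mA _ (by tauto), by ring⟩
  have hS : (B + B) \ (A + A) = {16 * l + 21, 16 * l + 23, 16 * l + 24, 16 * l + 28} := by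
    ext x
    simp only [Finset.mem_sdiff, Finset.mem_insert, Finset.mem_singleton]
    constructor
    · rintro ⟨hx, hnx⟩
      rw [Finset.mem_add] at hx
      obtain ⟨b1, hb1, b2, hb2, rfl⟩ := hx
      rw [hmemB] at hb1 hb2
      rcases hb1 with hb1 | rfl <;> rcases hb2 with hb2 | rfl
      · exact absurd (Finset.mem_add.2 ⟨b1, hb1, b2, hb2, rfl⟩) hnx
      · by_cases h7 : b1 = 8*l+7
        · left; omega
        by_cases h9 : b1 = 8*l+9
        · right; left; omega
        by_cases h10 : b1 = 8*l+10
        · right; right; left; omega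
        exact absurd (keyS b1 hb1 h7 h9 h10) hnx
      · by_cases h7 : b2 = 8*l+7
        · left; omega
        by_cases h9 : b2 = 8*l+9
        · right; left; omega
        by_cases h10 : b2 = 8*l+10
        · right; right; left; omega
        · have h := keyS b2 hb2 h7 h9 h10
          rw [add_comm b2] at h
          exact absurd h hnx
      · right; right; right; omega
    · have hmB : (8*l+14 : ℤ) ∈ B := (hmemB _).2 (Or.inr rfl)
      rintro (rfl | rfl | rfl | rfl)
      · exact ⟨Finset.mem_add.2 ⟨8*l+7, (hmemB _).2 (Or.inl (mA _ (Or.inr ⟨l, hl, le_refl l, by omega⟩))),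
          8*l+14, hmB, by ring⟩, fun h => by have := bddS _ h; omega⟩
      · exact ⟨Finset.mem_add.2 ⟨8*l+9, (hmemB _).2 (Or.inl (mA _ (Or.inr ⟨l, hl, le_refl l, by omega⟩))),
          8*l+14, hmB, by ring⟩, fun h => by have := bddS _ h; omega⟩
      · exact ⟨Finset.mem_add.2 ⟨8*l+10, (hmemB _).2 (Or.inl (mA _ (Or.inr ⟨l, hl, le_refl l, by omega⟩))),
          8*l+14, hmB, by ring⟩, fun h => by have := bddS _ h; omega⟩
      · exact ⟨Finset.mem_add.2 ⟨8*l+14, hmB, 8*l+14, hmB, by ring⟩,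
          fun h => by have := bddS _ h; omega⟩
  have hD : (B - B) \ (A - A) =
      {8 * l + 12, 8 * l + 13, 8 * l + 14, -(8 * l + 12), -(8 * l + 13), -(8 * l + 14)} := by
    ext x
    simp only [Finset.mem_sdiff, Finset.mem_insert, Finset.mem_singleton]
    constructor
    · rintro ⟨hx, hnx⟩
      rw [Finset.mem_sub] at hx
      obtain ⟨b1, hb1, b2, hb2, rfl⟩ := hx
      rw [hmemB] at hb1 hb2
      rcases hb1 with hb1 | rfl <;> rcases hb2 with hb2 | rfl
      · exact absurd (Finset.mem_sub.2 ⟨b1, hb1, b2, hb2, rfl⟩) hnx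
      · by_cases h0 : b1 = 0
        · right; right; right; right; right; omega
        by_cases h1 : b1 = 1
        · right; right; right; right; left; omega
        by_cases h2 : b1 = 2
        · right; right; right; left; omega
        · have h := negAA _ (keyD b1 hb1 h0 h1 h2)
          rw [show -((8*l+14) - b1) = b1 - (8*l+14) by ring] at h
          exact absurd h hnx
      · by_cases h0 : b2 = 0
        · right; right; left; omega
        by_cases h1 : b2 = 1
        · right; left; omega
        by_cases h2 : b2 = 2
        · left; omega
        · exact absurd (keyD b2 hb2 h0 h1 h2) hnx
      · exact absurd (by rw [sub_self]; exact zeroAA) hnx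
    · have hmB : (8*l+14 : ℤ) ∈ B := (hmemB _).2 (Or.inr rfl)
      have hb0 : (0:ℤ) ∈ B := (hmemB _).2 (Or.inl (mA _ (by tauto)))
      have hb1 : (1:ℤ) ∈ B := (hmemB _).2 (Or.inl (mA _ (by tauto)))
      have hb2 : (2:ℤ) ∈ B := (hmemB _).2 (Or.inl (mA _ (by tauto)))
      rintro (rfl | rfl | rfl | rfl | rfl | rfl)
      · exact ⟨Finset.mem_sub.2 ⟨8*l+14, hmB, 2, hb2, by ring⟩,
          fun h => by have := bddD _ h; omega⟩
      · exact ⟨Finset.mem_sub.2 ⟨8*l+14, hmB, 1, hb1, by ring⟩,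
          fun h => by have := bddD _ h; omega⟩
      · exact ⟨Finset.mem_sub.2 ⟨8*l+14, hmB, 0, hb0, by ring⟩,
          fun h => by have := bddD _ h; omega⟩
      · exact ⟨Finset.mem_sub.2 ⟨2, hb2, 8*l+14, hmB, by ring⟩,
          fun h => by have := bddD _ h; omega⟩
      · exact ⟨Finset.mem_sub.2 ⟨1, hb1, 8*l+14, hmB, by ring⟩,
          fun h => by have := bddD _ h; omega⟩
      · exact ⟨Finset.mem_sub.2 ⟨0, hb0, 8*l+14, hmB, by ring⟩,
          fun h => by have := bddD _ h; omega⟩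
  refine ⟨hS, hD, ?_, ?_⟩
  · rw [hS]
    rw [Finset.card_insert_of_notMem (by simp only [Finset.mem_insert, Finset.mem_singleton]; omega),
      Finset.card_insert_of_notMem (by simp only [Finset.mem_insert, Finset.mem_singleton]; omega),
      Finset.card_insert_of_notMem (by simp only [Finset.mem_singleton]; omega),
      Finset.card_singleton]
  · rw [hD]
    rw [Finset.card_insert_of_notMem (by simp only [Finset.mem_insert, Finset.mem_singleton]; omega),
      Finset.card_insert_of_notMem (by simp only [Finset.mem_insert, Finset.mem_singleton]; omega),
      Finset.card_insert_of_notMem (by simp only [Finset.mem_insert, Finset.mem_singleton]; omega),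
      Finset.card_insert_of_notMem (by simp only [Finset.mem_insert, Finset.mem_singleton]; omega),
      Finset.card_insert_of_notMem (by simp only [Finset.mem_singleton]; omega),
      Finset.card_singleton]
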